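/- For every nonempty roughly shift-invariant discrete set A ⊆ ℝ^d there exists a number D > 0 such that #(A ∩ Q(x,T)) / T^d → D as T → ∞, uniformly with respect to x ∈ ℝ^d. -/

import Mathlib

open Set

/-- The half-open cube `Q(b,r)` in `ℝ^d`. -/
def Qc {d : ℕ} (b : Fin d → ℝ) (r : ℝ) : Set (Fin d → ℝ) :=
  {y | ∀ j, b j ≤ y j ∧ y j < b j + r}

/-- `A` is discrete: its intersection with any ball is finite. -/
def IsDiscreteSet {d : ℕ} (A : Set (Fin d → ℝ)) : Prop :=
  ∀ (x : Fin d → ℝ) (r : ℝ), (A ∩ Metric.ball x r).Finite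

/-- `A` is roughly shift-invariant with constant `L` (sup norm). -/
def RSI {d : ℕ} (A : Set (Fin d → ℝ)) (L : ℝ) : Prop :=
  ∀ x : Fin d → ℝ, ∃ σ : A ≃ A, ∀ a : A, ‖(a : Fin d → ℝ) + x - (σ a : Fin d → ℝ)‖ < L

section Aux
variable {d : ℕ} {A : Set (Fin d → ℝ)} {L : ℝ}

lemma coord_close {v w : Fin d → ℝ} (h : ‖v - w‖ < L) (j : Fin d) : |v j - w j| < L := by
  refine lt_of_le_of_lt ?_ h
  have := norm_le_pi_norm (v - w) j
  simpa using this

lemma finQ (hdisc : IsDiscreteSet A) (x : Fin d → ℝ) (T : ℝ) : (A ∩ Qc x T).Finite := by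
  refine (hdisc x (|T| + 1)).subset (inter_subset_inter_right _ ?_)
  intro y hy
  have h1 : (0:ℝ) < |T| + 1 := by positivity
  rw [Metric.mem_ball, dist_pi_lt_iff h1]
  intro j
  have := hy j
  rw [Real.dist_eq, abs_lt]
  constructor
  · nlinarith [le_abs_self T, this.1, this.2]
  · nlinarith [le_abs_self T, this.1, this.2]

lemma monoQ (hdisc : IsDiscreteSet A) (x : Fin d → ℝ) {T T' : ℝ} (h : T ≤ T') :
    (A ∩ Qc x T).ncard ≤ (A ∩ Qc x T').ncard := by
  refine Set.ncard_le_ncard (inter_subset_inter_right _ ?_) (finQ hdisc x T')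
  intro y hy j
  exact ⟨(hy j).1, lt_of_lt_of_le (hy j).2 (by linarith)⟩

lemma shift_le (hdisc : IsDiscreteSet A) (hA : RSI A L) (x z : Fin d → ℝ) (T : ℝ) :
    (A ∩ Qc x T).ncard ≤ (A ∩ Qc z (T + 2*L)).ncard := by
  classical
  obtain ⟨σ, hσ⟩ := hA (z + (fun _ => L) - x)
  set f : (Fin d → ℝ) → (Fin d → ℝ) := fun a => if h : a ∈ A then (σ ⟨a, h⟩ : Fin d → ℝ) else a
    with hf
  refine Set.ncard_le_ncard_of_injOn f ?_ ?_ (finQ hdisc z (T + 2*L))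
  · rintro a ⟨haA, haQ⟩
    simp only [hf, dif_pos haA]
    refine ⟨(σ ⟨a, haA⟩).2, fun j => ?_⟩
    have h1 : ‖a + (z + (fun _ => L) - x) - (σ ⟨a, haA⟩ : Fin d → ℝ)‖ < L := hσ ⟨a, haA⟩
    have h2 := coord_close h1 j
    have h3 := haQ j
    simp only [Pi.add_apply, Pi.sub_apply] at h2
    rw [abs_lt] at h2
    exact ⟨by linarith [h2.2, h3.1], by linarith [h2.1, h3.2]⟩
  · rintro a ⟨haA, _⟩ b ⟨hbA, _⟩ hab
    simp only [hf, dif_pos haA, dif_pos hbA] at hab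
    have := σ.injective (Subtype.coe_injective hab)
    exact congrArg Subtype.val this

lemma cell_nonempty (hA : RSI A L) (hne : A.Nonempty) (y : Fin d → ℝ) :
    (A ∩ Qc y (2*L)).Nonempty := by
  obtain ⟨a₀, ha₀⟩ := hne
  obtain ⟨σ, hσ⟩ := hA (y + (fun _ => L) - a₀)
  refine ⟨(σ ⟨a₀, ha₀⟩ : Fin d → ℝ), (σ ⟨a₀, ha₀⟩).2, fun j => ?_⟩
  have h1 : ‖a₀ + (y + (fun _ => L) - a₀) - (σ ⟨a₀, ha₀⟩ : Fin d → ℝ)‖ < L := hσ ⟨a₀, ha₀⟩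
  have h2 := coord_close h1 j
  simp only [Pi.add_apply, Pi.sub_apply] at h2
  rw [abs_lt] at h2
  exact ⟨by linarith [h2.2], by linarith [h2.1]⟩

lemma L_pos (hA : RSI A L) (hne : A.Nonempty) : 0 < L := by
  obtain ⟨a₀, ha₀⟩ := hne
  obtain ⟨σ, hσ⟩ := hA 0
  exact lt_of_le_of_lt (norm_nonneg _) (hσ ⟨a₀, ha₀⟩)


lemma subdiv (hdisc : IsDiscreteSet A) (x : Fin d → ℝ) {T : ℝ} (hT : 0 < T) {n : ℕ} (hn : 0 < n) :
    (A ∩ Qc x ((n:ℝ)*T)).ncard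
      = ∑ k : Fin d → Fin n, (A ∩ Qc (fun j => x j + T * ((k j : ℕ) : ℝ)) T).ncard := by
  classical
  set s := (finQ hdisc x ((n:ℝ)*T)).toFinset with hs
  set g : (Fin d → ℝ) → (Fin d → Fin n) :=
    fun a j => ⟨min (⌊(a j - x j)/T⌋₊) (n-1), by omega⟩ with hg
  -- direction A
  have dirA : ∀ a : Fin d → ℝ, a ∈ Qc x ((n:ℝ)*T) →
      a ∈ Qc (fun j => x j + T * (((g a j : Fin n) : ℕ) : ℝ)) T := by
    intro a ha j
    have h3 := (ha j).1
    have h4 := (ha j).2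
    have hr0 : 0 ≤ (a j - x j)/T := div_nonneg (by linarith) hT.le
    have hmn : ⌊(a j - x j)/T⌋₊ < n := by
      rw [Nat.floor_lt hr0, div_lt_iff₀ hT]
      linarith
    have hle : (⌊(a j - x j)/T⌋₊ : ℝ) ≤ (a j - x j)/T := Nat.floor_le hr0
    have hlt : (a j - x j)/T < ⌊(a j - x j)/T⌋₊ + 1 := Nat.lt_floor_add_one _
    rw [le_div_iff₀ hT] at hle
    rw [div_lt_iff₀ hT] at hlt
    have hmin : ⌊(a j - x j)/T⌋₊ ⊓ (n-1) = ⌊(a j - x j)/T⌋₊ := by omega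
    constructor
    · simp only [hg, hmin]
      nlinarith
    · simp only [hg, hmin]
      nlinarith
  -- direction B
  have dirB : ∀ (a : Fin d → ℝ) (k : Fin d → Fin n),
      a ∈ Qc (fun j => x j + T * ((k j : ℕ) : ℝ)) T → a ∈ Qc x ((n:ℝ)*T) ∧ g a = k := by
    intro a k ha
    have hco : ∀ j, x j ≤ a j ∧ a j < x j + (n:ℝ)*T ∧ ⌊(a j - x j)/T⌋₊ = (k j : ℕ) := by
      intro j
      have h1 := (ha j).1
      have h2 := (ha j).2
      simp only at h1 h2
      have hkn' : (k j : ℕ) + 1 ≤ n := (k j).2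
      have hkn : ((k j : ℕ) : ℝ) + 1 ≤ (n : ℝ) := by exact_mod_cast hkn'
      have hk0 : (0:ℝ) ≤ ((k j : ℕ) : ℝ) := Nat.cast_nonneg _
      refine ⟨by nlinarith, by nlinarith, ?_⟩
      have hr0 : (0:ℝ) ≤ a j - x j := by nlinarith
      rw [Nat.floor_eq_iff (div_nonneg hr0 hT.le)]
      rw [le_div_iff₀ hT, div_lt_iff₀ hT]
      constructor
      · nlinarith
      · nlinarith
    refine ⟨fun j => ⟨(hco j).1, (hco j).2.1⟩, ?_⟩
    funext j
    have := (hco j).2.2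
    apply Fin.ext
    simp only [hg, this]
    omega
  -- fiberwise counting
  have hcard : s.card = ∑ k : Fin d → Fin n, (s.filter (fun a => g a = k)).card :=
    Finset.card_eq_sum_card_fiberwise (fun a _ => Finset.mem_univ _)
  have hleft : (A ∩ Qc x ((n:ℝ)*T)).ncard = s.card := by
    rw [hs, Set.ncard_eq_toFinset_card _ (finQ hdisc x ((n:ℝ)*T))]
  rw [hleft, hcard]
  refine Finset.sum_congr rfl fun k _ => ?_
  have hfib : (s.filter (fun a => g a = k)) =
      (finQ hdisc (fun j => x j + T * ((k j : ℕ) : ℝ)) T).toFinset := by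
    ext a
    simp only [Finset.mem_filter, hs, Set.Finite.mem_toFinset, Set.mem_inter_iff]
    constructor
    · rintro ⟨⟨haA, haQ⟩, hk⟩
      refine ⟨haA, ?_⟩
      have := dirA a haQ
      rwa [hk] at this
    · rintro ⟨haA, haQ⟩
      obtain ⟨hbig, hgk⟩ := dirB a k haQ
      exact ⟨⟨haA, hbig⟩, hgk⟩
  rw [hfib, ← Set.ncard_eq_toFinset_card _ (finQ hdisc _ T)]


lemma pow_one_add_le {θ : ℝ} (h0 : 0 ≤ θ) (h1 : θ ≤ 1) (d : ℕ) :
    (1+θ)^d ≤ 1 + 3^d * θ := by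
  induction d with
  | zero => simp; linarith
  | succ d ih =>
    have h2 : (0:ℝ) < 3^d := by positivity
    have h4 : (1:ℝ) ≤ 3^d := by
      simpa using pow_le_pow_left₀ (by norm_num : (0:ℝ) ≤ 1) (by norm_num : (1:ℝ) ≤ 3) d
    have h5 : (3:ℝ)^(d+1) = 3^d*3 := pow_succ 3 d
    calc (1+θ)^(d+1) = (1+θ)^d * (1+θ) := by ring
    _ ≤ (1 + 3^d*θ) * (1+θ) := by nlinarith
    _ ≤ 1 + 3^(d+1)*θ := by
        rw [h5]
        nlinarith [mul_le_mul_of_nonneg_right h4 h0,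
          mul_le_mul_of_nonneg_left h1 (mul_nonneg h2.le h0)]

lemma pow_one_sub_ge {θ : ℝ} (h0 : 0 ≤ θ) (h1 : θ ≤ 1) (d : ℕ) :
    1 - 3^d * θ ≤ (1-θ)^d := by
  have h2 := one_add_mul_le_pow (a := -θ) (by linarith) d
  have h2' : 1 + (d:ℝ)*(-θ) ≤ (1-θ)^d := by simpa [sub_eq_add_neg] using h2
  have h3 : (d:ℝ) ≤ 3^d := by
    calc (d:ℝ) ≤ 2^d := by exact_mod_cast (Nat.lt_two_pow_self (n := d)).le
    _ ≤ 3^d := pow_le_pow_left₀ (by norm_num) (by norm_num) d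
  nlinarith [h2', h3, h0]

lemma cor_upper (hdisc : IsDiscreteSet A) (hA : RSI A L) (x z : Fin d → ℝ) {T : ℝ}
    (hT : 0 < T) {n : ℕ} (hn : 0 < n) :
    (A ∩ Qc x ((n:ℝ)*T)).ncard ≤ n^d * (A ∩ Qc z (T + 2*L)).ncard := by
  classical
  rw [subdiv hdisc x hT hn]
  calc ∑ k : Fin d → Fin n, (A ∩ Qc (fun j => x j + T * ((k j : ℕ) : ℝ)) T).ncard
      ≤ ∑ _k : Fin d → Fin n, (A ∩ Qc z (T + 2*L)).ncard :=
        Finset.sum_le_sum (fun k _ => shift_le hdisc hA _ z T)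
    _ = n^d * (A ∩ Qc z (T + 2*L)).ncard := by
        rw [Finset.sum_const, Finset.card_univ, Fintype.card_fun]
        simp [smul_eq_mul]

lemma cor_lower (hdisc : IsDiscreteSet A) (hA : RSI A L) (x z : Fin d → ℝ) {T : ℝ}
    (hT : 0 < T) {n : ℕ} (hn : 0 < n) :
    n^d * (A ∩ Qc z (T - 2*L)).ncard ≤ (A ∩ Qc x ((n:ℝ)*T)).ncard := by
  classical
  rw [subdiv hdisc x hT hn]
  have key : ∀ k : Fin d → Fin n,
      (A ∩ Qc z (T - 2*L)).ncard ≤ (A ∩ Qc (fun j => x j + T * ((k j : ℕ) : ℝ)) T).ncard := by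
    intro k
    have h := shift_le hdisc hA z (fun j => x j + T * ((k j : ℕ) : ℝ)) (T - 2*L)
    have he : T - 2*L + 2*L = T := by ring
    rwa [he] at h
  calc (n^d * (A ∩ Qc z (T - 2*L)).ncard : ℕ)
      = ∑ _k : Fin d → Fin n, (A ∩ Qc z (T - 2*L)).ncard := by
        rw [Finset.sum_const, Finset.card_univ, Fintype.card_fun]
        simp [smul_eq_mul]
    _ ≤ _ := Finset.sum_le_sum (fun k _ => key k)


set_option maxHeartbeats 1000000 in
theorem mainthm (hdisc : IsDiscreteSet A) (hA : RSI A L) (hne : A.Nonempty) :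
    ∃ D : ℝ, 0 < D ∧ ∀ ε > (0:ℝ), ∃ T₀ : ℝ, ∀ T : ℝ, T₀ ≤ T → ∀ x : Fin d → ℝ,
      |((A ∩ Qc x T).ncard : ℝ) / T ^ d - D| < ε := by
  classical
  have hL : 0 < L := L_pos hA hne
  obtain ⟨N, hNdef⟩ : ∃ N : (Fin d → ℝ) → ℝ → ℝ,
      N = fun x T => ((A ∩ Qc x T).ncard : ℝ) := ⟨_, rfl⟩
  have F3 : ∀ (x : Fin d → ℝ) (T : ℝ), 0 ≤ N x T := by
    intro x T
    simp only [hNdef]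
    positivity
  have F1 : ∀ (x : Fin d → ℝ) {T T' : ℝ}, T ≤ T' → N x T ≤ N x T' := by
    intro x T T' h
    simp only [hNdef]
    exact_mod_cast monoQ hdisc x h
  have F4 : ∀ (x z : Fin d → ℝ) {T : ℝ}, 0 < T → ∀ {n : ℕ}, 0 < n →
      N x ((n:ℝ)*T) ≤ (n:ℝ)^d * N z (T + 2*L) := by
    intro x z T hT n hn
    simp only [hNdef]
    exact_mod_cast cor_upper hdisc hA x z hT hn
  have F5 : ∀ (x z : Fin d → ℝ) {T : ℝ}, 0 < T → ∀ {n : ℕ}, 0 < n →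
      (n:ℝ)^d * N z (T - 2*L) ≤ N x ((n:ℝ)*T) := by
    intro x z T hT n hn
    simp only [hNdef]
    exact_mod_cast cor_lower hdisc hA x z hT hn
  have F6 : ∀ z : Fin d → ℝ, 1 ≤ N z (2*L) := by
    intro z
    have hpos := (Set.ncard_pos (finQ hdisc z (2*L))).mpr (cell_nonempty hA hne z)
    simp only [hNdef]
    exact_mod_cast hpos
  obtain ⟨M, hMdef⟩ : ∃ M : ℝ, M = N 0 (1 + 2*L) := ⟨_, rfl⟩
  have hM0 : 0 ≤ M := hMdef ▸ F3 0 _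
  have h8L : (0:ℝ) < 8*L := by linarith only [hL]
  have h4L : (0:ℝ) < 4*L := by linarith only [hL]
  -- global upper bound
  have U : ∀ (x : Fin d → ℝ) (T : ℝ), 1 ≤ T → N x T ≤ M * (2*T)^d := by
    intro x T hT1
    have hT0 : (0:ℝ) < T := by linarith only [hT1]
    have hn1 : 0 < ⌈T⌉₊ := Nat.ceil_pos.mpr hT0
    have h1 : T ≤ (⌈T⌉₊:ℝ) * 1 := by rw [mul_one]; exact Nat.le_ceil T
    have h3 := F4 x 0 (by norm_num : (0:ℝ) < 1) hn1
    have h4 : ((⌈T⌉₊:ℕ):ℝ) ≤ 2*T := by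
      have h := Nat.ceil_lt_add_one hT0.le
      linarith only [h, hT1]
    have h5 : ((⌈T⌉₊:ℕ):ℝ)^d ≤ (2*T)^d := pow_le_pow_left₀ (Nat.cast_nonneg _) h4 d
    calc N x T ≤ N x ((⌈T⌉₊:ℝ)*1) := F1 x h1
      _ ≤ ((⌈T⌉₊:ℕ):ℝ)^d * N 0 (1 + 2*L) := h3
      _ ≤ (2*T)^d * M := by
          rw [hMdef]
          exact mul_le_mul_of_nonneg_right h5 (F3 0 _)
      _ = M * (2*T)^d := by ring
  -- global lower bound
  have Lo : ∀ (x : Fin d → ℝ) (T : ℝ), 8*L ≤ T → (T/(8*L))^d ≤ N x T := by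
    intro x T hT8
    have hT0 : (0:ℝ) < T := by linarith only [hT8, h8L]
    have hr2 : (2:ℝ) ≤ T/(4*L) := by rw [le_div_iff₀ h4L]; linarith only [hT8]
    have hn1 : 0 < ⌊T/(4*L)⌋₊ := Nat.floor_pos.mpr (by linarith only [hr2])
    have hfl : ((⌊T/(4*L)⌋₊:ℕ):ℝ) ≤ T/(4*L) := Nat.floor_le (by linarith only [hr2])
    have h1 : ((⌊T/(4*L)⌋₊:ℕ):ℝ) * (4*L) ≤ T := by
      calc ((⌊T/(4*L)⌋₊:ℕ):ℝ)*(4*L) ≤ (T/(4*L))*(4*L) := mul_le_mul_of_nonneg_right hfl h4L.le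
        _ = T := div_mul_cancel₀ T (ne_of_gt h4L)
    have h2 := F5 x 0 h4L hn1
    have h3 : (4*L - 2*L) = 2*L := by ring
    rw [h3] at h2
    have h6 : 1 ≤ N 0 (2*L) := F6 0
    have h7 : ((⌊T/(4*L)⌋₊:ℕ):ℝ)^d ≤ N x (((⌊T/(4*L)⌋₊:ℕ):ℝ)*(4*L)) := by
      calc ((⌊T/(4*L)⌋₊:ℕ):ℝ)^d = ((⌊T/(4*L)⌋₊:ℕ):ℝ)^d * 1 := by ring
        _ ≤ ((⌊T/(4*L)⌋₊:ℕ):ℝ)^d * N 0 (2*L) := mul_le_mul_of_nonneg_left h6 (by positivity)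
        _ ≤ _ := h2
    have h8 : T/(8*L) ≤ ((⌊T/(4*L)⌋₊:ℕ):ℝ) := by
      have hfl2 : T/(4*L) - 1 < ((⌊T/(4*L)⌋₊:ℕ):ℝ) := Nat.sub_one_lt_floor _
      have e1 : T/(4*L) = 2*(T/(8*L)) := by
        field_simp
        ring
      have e2 : (1:ℝ) ≤ T/(8*L) := by rw [le_div_iff₀ h8L]; linarith only [hT8]
      linarith only [hfl2, e1, e2]
    calc (T/(8*L))^d ≤ ((⌊T/(4*L)⌋₊:ℕ):ℝ)^d :=
          pow_le_pow_left₀ (div_nonneg hT0.le h8L.le) h8 d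
      _ ≤ N x (((⌊T/(4*L)⌋₊:ℕ):ℝ)*(4*L)) := h7
      _ ≤ N x T := F1 x h1
  -- the sequence and its liminf
  obtain ⟨φ, hφdef⟩ : ∃ φ : ℕ → ℝ, φ = fun k : ℕ => N 0 (k:ℝ) / (k:ℝ)^d := ⟨_, rfl⟩
  have φ_nonneg : ∀ k, 0 ≤ φ k := by
    intro k
    rw [hφdef]
    exact div_nonneg (F3 _ _) (by positivity)
  have φ_ub : ∀ k : ℕ, 1 ≤ (k:ℝ) → φ k ≤ M * 2^d := by
    intro k hk
    have hkpos : (0:ℝ) < (k:ℝ)^d := by positivity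
    rw [hφdef]
    show N 0 (k:ℝ) / (k:ℝ)^d ≤ M * 2^d
    rw [div_le_iff₀ hkpos]
    calc N 0 (k:ℝ) ≤ M * (2*(k:ℝ))^d := U 0 k hk
      _ = M * 2^d * (k:ℝ)^d := by rw [mul_pow]; ring
  obtain ⟨c, hcdef⟩ : ∃ c : ℝ, c = ((8*L)^d)⁻¹ := ⟨_, rfl⟩
  have hc : 0 < c := by rw [hcdef]; exact inv_pos.mpr (pow_pos h8L d)
  have φ_lb : ∀ k : ℕ, 8*L ≤ (k:ℝ) → c ≤ φ k := by
    intro k hk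
    have hk0 : (0:ℝ) < (k:ℝ) := by linarith only [hk, h8L]
    have hkpos : (0:ℝ) < (k:ℝ)^d := by positivity
    rw [hφdef]
    show c ≤ N 0 (k:ℝ) / (k:ℝ)^d
    rw [le_div_iff₀ hkpos]
    have hlo := Lo 0 k hk
    have e : ((k:ℝ)/(8*L))^d = c * (k:ℝ)^d := by
      rw [div_pow, hcdef, div_eq_mul_inv]
      ring
    calc c * (k:ℝ)^d = ((k:ℝ)/(8*L))^d := e.symm
      _ ≤ N 0 (k:ℝ) := hlo
  obtain ⟨α, hα⟩ : ∃ α : ℝ, α = Filter.liminf φ Filter.atTop := ⟨_, rfl⟩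
  have hbdd : Filter.IsBoundedUnder (· ≥ ·) Filter.atTop φ :=
    Filter.isBoundedUnder_of ⟨0, fun k => φ_nonneg k⟩
  have hbddle : Filter.IsBoundedUnder (· ≤ ·) Filter.atTop φ := by
    apply Filter.isBoundedUnder_of
    refine ⟨max (M*2^d) (φ 0), fun k => ?_⟩
    rcases Nat.eq_zero_or_pos k with h | h
    · rw [h]; exact le_max_right _ _
    · exact le_trans (φ_ub k (by exact_mod_cast h)) (le_max_left _ _)
  have hcob : Filter.IsCoboundedUnder (· ≥ ·) Filter.atTop φ := hbddle.isCoboundedUnder_ge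
  have hαc : c ≤ α := by
    rw [hα]
    apply Filter.le_liminf_of_le hcob
    filter_upwards [Filter.eventually_ge_atTop ⌈8*L⌉₊] with k hk
    exact φ_lb k (le_trans (Nat.le_ceil _) (by exact_mod_cast hk))
  have hαB : α ≤ M * 2^d := by
    rw [hα]
    apply Filter.liminf_le_of_frequently_le _ hbdd
    apply Filter.Eventually.frequently
    filter_upwards [Filter.eventually_ge_atTop 1] with k hk
    exact φ_ub k (by exact_mod_cast hk)
  have hα0 : 0 < α := lt_of_lt_of_le hc hαc
  obtain ⟨B, hB⟩ : ∃ B : ℝ, B = M * 2^d * 2 + 2 := ⟨_, rfl⟩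
  have hMd0 : (0:ℝ) ≤ M * 2^d := by positivity
  have hB1 : 1 ≤ B := by rw [hB]; linarith only [hMd0]
  have hB0 : (0:ℝ) < B := by linarith only [hB1]
  refine ⟨α, hα0, ?_⟩
  intro ε hε
  have h3d1 : (1:ℝ) ≤ 3^d := by
    simpa using pow_le_pow_left₀ (by norm_num : (0:ℝ) ≤ 1) (by norm_num : (1:ℝ) ≤ 3) d
  have h3d0 : (0:ℝ) < 3^d := by positivity
  obtain ⟨δ, hδ⟩ : ∃ δ : ℝ, δ = min (ε/4) (c/2) := ⟨_, rfl⟩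
  have hδ0 : 0 < δ := by
    rw [hδ]
    exact lt_min (by linarith only [hε]) (by linarith only [hc])
  have hδε : δ ≤ ε/4 := by rw [hδ]; exact min_le_left _ _
  have hδc : δ ≤ c/2 := by rw [hδ]; exact min_le_right _ _
  have hδα : δ ≤ α/2 := le_trans hδc (by linarith only [hαc])
  have hαδB : α + δ ≤ B := by rw [hB]; linarith only [hαB, hδα, hMd0, hα0]
  have hαδ0 : 0 ≤ α - δ := by linarith only [hδα, hα0]
  have hαδB2 : α - δ ≤ B := by rw [hB]; linarith only [hαB, hδ0, hMd0]
  have h9dB : (0:ℝ) < 9*(3^d*B) := by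
    have := mul_pos h3d0 hB0
    linarith only [this]
  obtain ⟨η, hηdef⟩ : ∃ η : ℝ, η = min (3⁻¹) (ε/(9*(3^d*B))) := ⟨_, rfl⟩
  have hη0 : 0 < η := by
    rw [hηdef]
    exact lt_min (by norm_num) (div_pos hε h9dB)
  have hη3 : η ≤ 3⁻¹ := by rw [hηdef]; exact min_le_left _ _
  have hη1 : η ≤ 1 := by linarith only [hη3]
  have hηE : η * (9*(3^d*B)) ≤ ε := by
    have h : η ≤ ε/(9*(3^d*B)) := by rw [hηdef]; exact min_le_right _ _
    exact (le_div_iff₀ h9dB).mp h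
  -- eventual lower bound along integers
  have hev : ∀ᶠ k in Filter.atTop, α - δ < φ k :=
    Filter.eventually_lt_of_lt_liminf (by rw [← hα]; linarith only [hδ0]) hbdd
  obtain ⟨K₁, hK₁⟩ := Filter.eventually_atTop.mp hev
  have hfr : ∃ᶠ k in Filter.atTop, φ k < α + δ :=
    Filter.frequently_lt_of_liminf_lt hcob (by rw [← hα]; linarith only [hδ0])
  obtain ⟨X, hX⟩ : ∃ X : ℝ, X = 16*L + 16 + 6*L/η + (4*L+4)/η := ⟨_, rfl⟩
  obtain ⟨Kbig, hKbig⟩ : ∃ Kbig : ℕ, Kbig = K₁ + ⌈4*L⌉₊ + 2 + ⌈X⌉₊ := ⟨_, rfl⟩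
  obtain ⟨k, hk1, hk2⟩ := (hfr.and_eventually (Filter.eventually_ge_atTop Kbig)).exists
  have hkX : X ≤ (k:ℝ) := by
    have h1 : ⌈X⌉₊ ≤ k := le_trans (by omega) hk2
    calc X ≤ (⌈X⌉₊ : ℝ) := Nat.le_ceil X
      _ ≤ (k:ℝ) := by exact_mod_cast h1
  have hkK₁ : K₁ + ⌈4*L⌉₊ + 2 ≤ k := le_trans (by omega) hk2
  have hXa : (0:ℝ) ≤ 6*L/η := div_nonneg (by linarith only [hL]) hη0.le
  have hXb : (0:ℝ) ≤ (4*L+4)/η := div_nonneg (by linarith only [hL]) hη0.le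
  have hkL : 16*L + 16 ≤ (k:ℝ) := by
    rw [hX] at hkX
    linarith only [hkX, hXa, hXb]
  obtain ⟨T, hTdef⟩ : ∃ T : ℝ, T = (k:ℝ) - 2*L := ⟨_, rfl⟩
  have hT0 : 0 < T := by rw [hTdef]; linarith only [hkL, hL]
  have hT1 : 1 ≤ T := by rw [hTdef]; linarith only [hkL, hL]
  have hTk : T + 2*L = (k:ℝ) := by rw [hTdef]; ring
  have hTX : X - 2*L ≤ T := by rw [hTdef]; linarith only [hkX]
  have hη2L : 2*L ≤ η*T := by
    have h1 : 6*L/η ≤ T := by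
      rw [hX] at hTX
      linarith only [hTX, hXb, hL]
    have h2 : 6*L ≤ T*η := (div_le_iff₀ hη0).mp h1
    linarith only [h2, hL]
  have hη4L4 : 4*L+4 ≤ η*T := by
    have h1 : (4*L+4)/η ≤ T := by
      rw [hX] at hTX
      linarith only [hTX, hXa, hL]
    have h2 : 4*L+4 ≤ T*η := (div_le_iff₀ hη0).mp h1
    linarith only [h2]
  -- the auxiliary integer m
  obtain ⟨m, hm⟩ : ∃ m : ℕ, m = k - (⌈4*L⌉₊ + 1) := ⟨_, rfl⟩
  have hmK₁ : K₁ ≤ m := by omega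
  have hm1n : 1 ≤ m := by omega
  have hmcast : (m:ℝ) = (k:ℝ) - ((⌈4*L⌉₊:ℝ) + 1) := by
    have h1 : ⌈4*L⌉₊ + 1 ≤ k := by omega
    rw [hm]
    push_cast [Nat.cast_sub h1]
    ring
  have hceil : 4*L ≤ (⌈4*L⌉₊:ℝ) := Nat.le_ceil _
  have hceil2 : (⌈4*L⌉₊:ℝ) < 4*L + 1 := Nat.ceil_lt_add_one (by linarith only [hL])
  have hm1 : (m:ℝ) ≤ T - 2*L := by
    rw [hmcast, hTdef]
    linarith only [hceil]
  have hm2 : (1-η)*T ≤ (m:ℝ) := by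
    have e : (1-η)*T = T - η*T := by ring
    rw [e, hmcast]
    linarith only [hη4L4, hceil2, hTk, hL]
  have hk0 : (0:ℝ) < (k:ℝ) := by linarith only [hkL, hL]
  have hkpow : (0:ℝ) < (k:ℝ)^d := by positivity
  have hm0 : (0:ℝ) < (m:ℝ) := by exact_mod_cast hm1n
  have hmpow : (0:ℝ) < (m:ℝ)^d := by positivity
  have hkT : (k:ℝ) ≤ (1+η)*T := by
    have e : (1+η)*T = T + η*T := by ring
    rw [e]
    linarith only [hη2L, hTk, hL]
  -- counting bounds at scales k and m
  have hNk : N 0 (k:ℝ) ≤ (α + δ) * (k:ℝ)^d := by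
    have e : N 0 (k:ℝ) = φ k * (k:ℝ)^d := by
      rw [hφdef]
      show N 0 (k:ℝ) = N 0 (k:ℝ) / (k:ℝ)^d * (k:ℝ)^d
      exact (div_mul_cancel₀ _ (ne_of_gt hkpow)).symm
    rw [e]
    exact mul_le_mul_of_nonneg_right (le_of_lt hk1) (by positivity)
  have hNm : (α - δ) * (m:ℝ)^d ≤ N 0 (m:ℝ) := by
    have hφm := hK₁ m hmK₁
    have e : N 0 (m:ℝ) = φ m * (m:ℝ)^d := by
      rw [hφdef]
      show N 0 (m:ℝ) = N 0 (m:ℝ) / (m:ℝ)^d * (m:ℝ)^d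
      exact (div_mul_cancel₀ _ (ne_of_gt hmpow)).symm
    rw [e]
    exact mul_le_mul_of_nonneg_right (le_of_lt hφm) (by positivity)
  -- bounds for multiples of T
  have UPn : ∀ (x : Fin d → ℝ) {n : ℕ}, 0 < n →
      N x ((n:ℝ)*T) ≤ (n:ℝ)^d * ((α+δ) * (k:ℝ)^d) := by
    intro x n hn
    calc N x ((n:ℝ)*T) ≤ (n:ℝ)^d * N 0 (T + 2*L) := F4 x 0 hT0 hn
      _ = (n:ℝ)^d * N 0 (k:ℝ) := by rw [hTk]
      _ ≤ _ := mul_le_mul_of_nonneg_left hNk (by positivity)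
  have LOn : ∀ (x : Fin d → ℝ) {n : ℕ}, 0 < n →
      (n:ℝ)^d * ((α-δ) * (m:ℝ)^d) ≤ N x ((n:ℝ)*T) := by
    intro x n hn
    have h1 : N 0 (m:ℝ) ≤ N 0 (T - 2*L) := F1 0 hm1
    calc (n:ℝ)^d * ((α-δ)*(m:ℝ)^d) ≤ (n:ℝ)^d * N 0 (m:ℝ) :=
          mul_le_mul_of_nonneg_left hNm (by positivity)
      _ ≤ (n:ℝ)^d * N 0 (T - 2*L) := mul_le_mul_of_nonneg_left h1 (by positivity)
      _ ≤ N x ((n:ℝ)*T) := F5 x 0 hT0 hn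
  -- the threshold
  obtain ⟨n₀, hn₀⟩ : ∃ n₀ : ℕ, n₀ = ⌈η⁻¹⌉₊ + 1 := ⟨_, rfl⟩
  refine ⟨((n₀:ℝ)+1) * T, ?_⟩
  intro S hS x
  have hn₀0 : (0:ℝ) < (n₀:ℝ)+1 := by positivity
  have hS0 : (0:ℝ) < S := lt_of_lt_of_le (mul_pos hn₀0 hT0) hS
  obtain ⟨n, hn⟩ : ∃ n : ℕ, n = ⌊S/T⌋₊ := ⟨_, rfl⟩
  have hST : (n₀:ℝ) + 1 ≤ S/T := by
    rw [le_div_iff₀ hT0]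
    exact hS
  have hnn₀ : n₀ + 1 ≤ n := by
    rw [hn]
    apply Nat.le_floor
    push_cast
    exact hST
  have hn1 : 0 < n := by omega
  have hnR : (0:ℝ) < (n:ℝ) := by exact_mod_cast hn1
  have hfl : (n:ℝ) ≤ S/T := by
    rw [hn]
    exact Nat.floor_le (div_nonneg hS0.le hT0.le)
  have hnle : (n:ℝ)*T ≤ S := by
    calc (n:ℝ)*T ≤ (S/T)*T := mul_le_mul_of_nonneg_right hfl hT0.le
      _ = S := div_mul_cancel₀ S (ne_of_gt hT0)
  have hflt : S/T < (n:ℝ)+1 := by rw [hn]; exact Nat.lt_floor_add_one _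
  have hnlt : S < ((n:ℝ)+1)*T := by
    calc S = (S/T)*T := (div_mul_cancel₀ S (ne_of_gt hT0)).symm
      _ < ((n:ℝ)+1)*T := mul_lt_mul_of_pos_right hflt hT0
  have hηn : 1 ≤ η * (n:ℝ) := by
    have h1 : η⁻¹ ≤ (n₀:ℝ) := by
      rw [hn₀]
      push_cast
      linarith only [Nat.le_ceil (η⁻¹ : ℝ)]
    have h2 : (n₀:ℝ) ≤ (n:ℝ) := by exact_mod_cast (by omega : n₀ ≤ n)
    calc (1:ℝ) = η * η⁻¹ := (mul_inv_cancel₀ (ne_of_gt hη0)).symm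
      _ ≤ η * (n:ℝ) := mul_le_mul_of_nonneg_left (h1.trans h2) hη0.le
  have hSd : (0:ℝ) < S^d := pow_pos hS0 d
  have hnT0 : (0:ℝ) < (n:ℝ)*T := mul_pos hnR hT0
  have hn1T0 : (0:ℝ) < ((n:ℝ)+1)*T := mul_pos (by positivity) hT0
  have hnTd : (0:ℝ) < ((n:ℝ)*T)^d := pow_pos hnT0 d
  have hn1Td : (0:ℝ) < (((n:ℝ)+1)*T)^d := pow_pos hn1T0 d
  -- UPPER estimate
  have hup : N x S / S^d ≤ (α+δ) * (1 + 3*η)^d := by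
    have ecast : (((n+1:ℕ)):ℝ) = (n:ℝ)+1 := by push_cast; ring
    have h3 : N x S ≤ ((n:ℝ)+1)^d * ((α+δ)*(k:ℝ)^d) := by
      calc N x S ≤ N x ((((n+1:ℕ)):ℝ)*T) := F1 x (by rw [ecast]; linarith only [hnlt])
        _ ≤ (((n+1:ℕ)):ℝ)^d * ((α+δ)*(k:ℝ)^d) := UPn x (by omega)
        _ = ((n:ℝ)+1)^d * ((α+δ)*(k:ℝ)^d) := by rw [ecast]
    have h4 : N x S / S^d ≤ N x S / ((n:ℝ)*T)^d :=
      div_le_div_of_nonneg_left (F3 x S) hnTd (pow_le_pow_left₀ hnT0.le hnle d)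
    have h5 : N x S / ((n:ℝ)*T)^d ≤ (((n:ℝ)+1)^d * ((α+δ)*(k:ℝ)^d)) / ((n:ℝ)*T)^d := by
      gcongr
    have h6 : (((n:ℝ)+1)^d * ((α+δ)*(k:ℝ)^d)) / ((n:ℝ)*T)^d
        = (α+δ) * ((((n:ℝ)+1)*(k:ℝ))/((n:ℝ)*T))^d := by
      rw [div_pow, mul_pow ((n:ℝ)+1) (k:ℝ), div_eq_mul_inv, div_eq_mul_inv]
      ring
    have h7 : (((n:ℝ)+1)*(k:ℝ))/((n:ℝ)*T) ≤ 1 + 3*η := by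
      rw [div_le_iff₀ hnT0]
      have e1 : (n:ℝ)+1 ≤ (1+η)*(n:ℝ) := by linarith only [hηn]
      have e2 : ((n:ℝ)+1)*(k:ℝ) ≤ ((1+η)*(n:ℝ))*((1+η)*T) :=
        mul_le_mul e1 hkT hk0.le (by positivity)
      have e3 : (0:ℝ) ≤ (η - η*η) * ((n:ℝ)*T) :=
        mul_nonneg (by nlinarith only [hη0.le, hη1]) hnT0.le
      nlinarith only [e2, e3]
    have h8 : ((((n:ℝ)+1)*(k:ℝ))/((n:ℝ)*T))^d ≤ (1+3*η)^d :=
      pow_le_pow_left₀ (div_nonneg (by positivity) hnT0.le) h7 d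
    calc N x S / S^d ≤ (((n:ℝ)+1)^d * ((α+δ)*(k:ℝ)^d)) / ((n:ℝ)*T)^d := h4.trans h5
      _ = (α+δ) * ((((n:ℝ)+1)*(k:ℝ))/((n:ℝ)*T))^d := h6
      _ ≤ (α+δ) * (1+3*η)^d :=
          mul_le_mul_of_nonneg_left h8 (by linarith only [hα0, hδ0])
  have hup2 : N x S / S^d < α + ε := by
    have hb := pow_one_add_le (θ := 3*η) (by linarith only [hη0]) (by linarith only [hη3]) d
    have h9 : (α+δ)*(1+3*η)^d ≤ (α+δ)*(1 + 3^d*(3*η)) :=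
      mul_le_mul_of_nonneg_left hb (by linarith only [hα0, hδ0])
    have h11 : (α+δ)*(3^d*η) ≤ B*(3^d*η) :=
      mul_le_mul_of_nonneg_right hαδB (mul_nonneg h3d0.le hη0.le)
    nlinarith only [hup, h9, h11, hηE, hδε, hε]
  -- LOWER estimate
  have hlo : (α-δ) * (1 - 2*η)^d ≤ N x S / S^d := by
    have h3 : (n:ℝ)^d*((α-δ)*(m:ℝ)^d) ≤ N x S := le_trans (LOn x hn1) (F1 x hnle)
    have h4 : N x S / (((n:ℝ)+1)*T)^d ≤ N x S / S^d :=
      div_le_div_of_nonneg_left (F3 x S) hSd (pow_le_pow_left₀ hS0.le hnlt.le d)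
    have h5 : ((n:ℝ)^d*((α-δ)*(m:ℝ)^d)) / (((n:ℝ)+1)*T)^d ≤ N x S / (((n:ℝ)+1)*T)^d := by
      gcongr
    have h6 : ((n:ℝ)^d*((α-δ)*(m:ℝ)^d)) / (((n:ℝ)+1)*T)^d
        = (α-δ) * (((n:ℝ)*(m:ℝ))/(((n:ℝ)+1)*T))^d := by
      rw [div_pow, mul_pow (n:ℝ) (m:ℝ), div_eq_mul_inv, div_eq_mul_inv]
      ring
    have h7 : 1-2*η ≤ ((n:ℝ)*(m:ℝ))/(((n:ℝ)+1)*T) := by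
      rw [le_div_iff₀ hn1T0]
      have e1 : (n:ℝ)*((1-η)*T) ≤ (n:ℝ)*(m:ℝ) := mul_le_mul_of_nonneg_left hm2 hnR.le
      have e2 : (0:ℝ) ≤ ((1-η)*(n:ℝ) - (1-2*η)*((n:ℝ)+1)) * T :=
        mul_nonneg (by linarith only [hηn, hη0.le]) hT0.le
      nlinarith only [e1, e2]
    have h8 : (1-2*η)^d ≤ (((n:ℝ)*(m:ℝ))/(((n:ℝ)+1)*T))^d :=
      pow_le_pow_left₀ (by linarith only [hη3]) h7 d
    calc (α-δ) * (1-2*η)^d ≤ (α-δ) * (((n:ℝ)*(m:ℝ))/(((n:ℝ)+1)*T))^d :=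
          mul_le_mul_of_nonneg_left h8 hαδ0
      _ = ((n:ℝ)^d*((α-δ)*(m:ℝ)^d)) / (((n:ℝ)+1)*T)^d := h6.symm
      _ ≤ N x S / (((n:ℝ)+1)*T)^d := h5
      _ ≤ N x S / S^d := h4
  have hlo2 : α - ε < N x S / S^d := by
    have hb := pow_one_sub_ge (θ := 2*η) (by linarith only [hη0]) (by linarith only [hη3]) d
    have h9 : (α-δ)*(1 - 3^d*(2*η)) ≤ (α-δ)*(1-2*η)^d :=
      mul_le_mul_of_nonneg_left hb hαδ0
    have h11 : (α-δ)*(3^d*η) ≤ B*(3^d*η) :=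
      mul_le_mul_of_nonneg_right hαδB2 (mul_nonneg h3d0.le hη0.le)
    nlinarith only [hlo, h9, h11, hηE, hδε, hε, hδ0]
  have efin : ((A ∩ Qc x S).ncard : ℝ) = N x S := by rw [hNdef]
  rw [efin, abs_lt]
  constructor
  · linarith only [hlo2]
  · linarith only [hup2]


end Aux

theorem stmt5 {d : ℕ} (A : Set (Fin d → ℝ)) (L : ℝ)
    (hdisc : IsDiscreteSet A) (hA : RSI A L) (hne : A.Nonempty) :
    ∃ D : ℝ, 0 < D ∧
      ∀ ε > (0 : ℝ), ∃ T₀ : ℝ, ∀ T : ℝ, T₀ ≤ T → ∀ x : Fin d → ℝ,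
        |((A ∩ Qc x T).ncard : ℝ) / T ^ d - D| < ε := by
  exact mainthm hdisc hA hne
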